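/- There exists a constant φ₀ > 0 such that |φ(k,l) + φ(l,m)| ≥ φ₀ for all (k,l,m) ∈ ℝ³. (Second assertion of Proposition A.1.) -/

import Mathlib

open Real Complex

/-- Japanese bracket `⟨k⟩ = √(1+k²)`. -/
noncomputable def jb (k : ℝ) : ℝ := Real.sqrt (1 + k ^ 2)

/-- The Fourier symbol `λ̂(k) = -d k² - i⟨k⟩`. -/
noncomputable def lamHat (d : ℝ) (k : ℝ) : ℂ := -(d * k ^ 2 : ℝ) - Complex.I * (jb k : ℝ)

/-- The phase function `φ(k,l) = -λ̂(k) + λ̂(k-l) + λ̂(l)`. -/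
noncomputable def phase (d : ℝ) (k l : ℝ) : ℂ := -lamHat d k + lamHat d (k - l) + lamHat d l

lemma jb_nonneg (x : ℝ) : 0 ≤ jb x := Real.sqrt_nonneg _

lemma jb_sq (x : ℝ) : jb x ^ 2 = 1 + x ^ 2 :=
  Real.sq_sqrt (by positivity)

lemma abs_le_jb (x : ℝ) : |x| ≤ jb x := by
  rw [jb, ← Real.sqrt_sq_eq_abs]
  exact Real.sqrt_le_sqrt (by nlinarith)

lemma one_le_jb (x : ℝ) : 1 ≤ jb x := by
  have h := Real.sqrt_le_sqrt (show (1:ℝ) ≤ 1 + x ^ 2 by nlinarith [sq_nonneg x])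
  rwa [Real.sqrt_one] at h

lemma jb_add_abs (x y : ℝ) : jb (x + y) ≤ jb x + |y| := by
  have h0 : 0 ≤ jb x + |y| := add_nonneg (jb_nonneg x) (abs_nonneg y)
  have hxy : x * y ≤ jb x * |y| := by
    calc x * y ≤ |x * y| := le_abs_self _
    _ = |x| * |y| := abs_mul x y
    _ ≤ jb x * |y| := by have := abs_le_jb x; have := abs_nonneg y; nlinarith
  have key : 1 + (x + y) ^ 2 ≤ (jb x + |y|) ^ 2 := by
    have h1 := jb_sq x
    have h2 := _root_.sq_abs y
    nlinarith
  calc jb (x + y) ≤ Real.sqrt ((jb x + |y|) ^ 2) := Real.sqrt_le_sqrt key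
  _ = jb x + |y| := Real.sqrt_sq h0

lemma jb_sub_abs_ge (x : ℝ) (hx : |x| ≤ 1) : Real.sqrt 2 - 1 ≤ jb x - |x| := by
  have h2 : Real.sqrt 2 ^ 2 = 2 := Real.sq_sqrt (by norm_num)
  have hsn : 0 ≤ Real.sqrt 2 := Real.sqrt_nonneg 2
  have h1 : 1 ≤ Real.sqrt 2 := by nlinarith
  have hsq := jb_sq x
  have hab := _root_.sq_abs x
  have hge := abs_le_jb x
  have h0 := abs_nonneg x
  have hjle : jb x ≤ Real.sqrt 2 := by
    rw [jb, ← h2, Real.sqrt_sq hsn]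
    exact Real.sqrt_le_sqrt (by nlinarith)
  -- (jb x - |x|) * (jb x + |x|) = 1
  have hid : (jb x - |x|) * (jb x + |x|) = 1 := by nlinarith
  have hpos : 0 < jb x + |x| := by have := one_le_jb x; linarith
  have h11 : (Real.sqrt 2 - 1) * (Real.sqrt 2 + 1) = 1 := by linear_combination h2
  have hle : jb x + |x| ≤ Real.sqrt 2 + 1 := by linarith
  have hmul : (Real.sqrt 2 - 1) * (jb x + |x|) ≤ 1 := by
    calc (Real.sqrt 2 - 1) * (jb x + |x|) ≤ (Real.sqrt 2 - 1) * (Real.sqrt 2 + 1) :=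
      mul_le_mul_of_nonneg_left hle (by linarith : (0:ℝ) ≤ Real.sqrt 2 - 1)
    _ = 1 := h11
  refine le_of_mul_le_mul_right ?_ hpos
  rw [hid]; exact hmul

set_option maxHeartbeats 800000 in
/-- Key real-variable estimate: either the imaginary part or the real part of the
phase sum is bounded away from zero. -/
lemma phase_key (d A B m : ℝ) (hd : 0 < d) :
    min (Real.sqrt 2 - 1) (6 * d) ≤
      max (jb A + jb B + jb m - jb (A + B + m)) (2 * d * (A * B + A * m + B * m)) := by
  have h2 : Real.sqrt 2 ^ 2 = 2 := Real.sq_sqrt (by norm_num)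
  have hsn : 0 ≤ Real.sqrt 2 := Real.sqrt_nonneg 2
  have h1 : 1 < Real.sqrt 2 := by nlinarith
  have hAa := abs_le_jb A
  have hBa := abs_le_jb B
  have hma := abs_le_jb m
  have hmin1 : min (Real.sqrt 2 - 1) (6 * d) ≤ Real.sqrt 2 - 1 := min_le_left _ _
  have hmin2 : min (Real.sqrt 2 - 1) (6 * d) ≤ 2 := by nlinarith
  by_cases hA1 : |A| ≤ 1
  · have hkb : jb (A + B + m) ≤ jb B + jb m + |A| := by
      have e1 : jb (A + B + m) = jb (B + m + A) := by congr 1; ring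
      have e2 := jb_add_abs (B + m) A
      have e3 := jb_add_abs B m
      rw [e1]; linarith
    have := jb_sub_abs_ge A hA1
    exact le_trans hmin1 (le_max_of_le_left (by linarith))
  by_cases hB1 : |B| ≤ 1
  · have hkb : jb (A + B + m) ≤ jb A + jb m + |B| := by
      have e1 : jb (A + B + m) = jb (A + m + B) := by congr 1; ring
      have e2 := jb_add_abs (A + m) B
      have e3 := jb_add_abs A m
      rw [e1]; linarith
    have := jb_sub_abs_ge B hB1
    exact le_trans hmin1 (le_max_of_le_left (by linarith))
  by_cases hm1 : |m| ≤ 1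
  · have hkb : jb (A + B + m) ≤ jb A + jb B + |m| := by
      have e2 := jb_add_abs (A + B) m
      have e3 := jb_add_abs A B
      linarith
    have := jb_sub_abs_ge m hm1
    exact le_trans hmin1 (le_max_of_le_left (by linarith))
  push_neg at hA1 hB1 hm1
  by_cases hab : A * B < 0
  · have habs : |A + B| ≤ |A| + |B| - 2 := by
      rcases mul_neg_iff.mp hab with ⟨hA0, hB0⟩ | ⟨hA0, hB0⟩
      · rw [abs_of_pos hA0] at hA1 ⊢; rw [abs_of_neg hB0] at hB1 ⊢
        rw [abs_le]; constructor <;> linarith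
      · rw [abs_of_neg hA0] at hA1 ⊢; rw [abs_of_pos hB0] at hB1 ⊢
        rw [abs_le]; constructor <;> linarith
    have hkb : jb (A + B + m) ≤ jb m + |A + B| := by
      have e1 : jb (A + B + m) = jb (m + (A + B)) := by congr 1; ring
      rw [e1]; exact jb_add_abs m (A + B)
    exact le_trans hmin2 (le_max_of_le_left (by linarith))
  by_cases ham : A * m < 0
  · have habs : |A + m| ≤ |A| + |m| - 2 := by
      rcases mul_neg_iff.mp ham with ⟨hA0, hm0⟩ | ⟨hA0, hm0⟩
      · rw [abs_of_pos hA0] at hA1 ⊢; rw [abs_of_neg hm0] at hm1 ⊢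
        rw [abs_le]; constructor <;> linarith
      · rw [abs_of_neg hA0] at hA1 ⊢; rw [abs_of_pos hm0] at hm1 ⊢
        rw [abs_le]; constructor <;> linarith
    have hkb : jb (A + B + m) ≤ jb B + |A + m| := by
      have e1 : jb (A + B + m) = jb (B + (A + m)) := by congr 1; ring
      rw [e1]; exact jb_add_abs B (A + m)
    exact le_trans hmin2 (le_max_of_le_left (by linarith))
  by_cases hbm : B * m < 0
  · have habs : |B + m| ≤ |B| + |m| - 2 := by
      rcases mul_neg_iff.mp hbm with ⟨hB0, hm0⟩ | ⟨hB0, hm0⟩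
      · rw [abs_of_pos hB0] at hB1 ⊢; rw [abs_of_neg hm0] at hm1 ⊢
        rw [abs_le]; constructor <;> linarith
      · rw [abs_of_neg hB0] at hB1 ⊢; rw [abs_of_pos hm0] at hm1 ⊢
        rw [abs_le]; constructor <;> linarith
    have hkb : jb (A + B + m) ≤ jb A + |B + m| := by
      have e1 : jb (A + B + m) = jb (A + (B + m)) := by congr 1; ring
      rw [e1]; exact jb_add_abs A (B + m)
    exact le_trans hmin2 (le_max_of_le_left (by linarith))
  push_neg at hab ham hbm
  have hab1 : 1 ≤ A * B := by
    have h : 1 ≤ |A * B| := by rw [abs_mul]; nlinarith [abs_nonneg A, abs_nonneg B]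
    rcases abs_cases (A * B) with ⟨hh, _⟩ | ⟨hh, _⟩ <;> linarith
  have ham1 : 1 ≤ A * m := by
    have h : 1 ≤ |A * m| := by rw [abs_mul]; nlinarith [abs_nonneg A, abs_nonneg m]
    rcases abs_cases (A * m) with ⟨hh, _⟩ | ⟨hh, _⟩ <;> linarith
  have hbm1 : 1 ≤ B * m := by
    have h : 1 ≤ |B * m| := by rw [abs_mul]; nlinarith [abs_nonneg B, abs_nonneg m]
    rcases abs_cases (B * m) with ⟨hh, _⟩ | ⟨hh, _⟩ <;> linarith
  refine le_trans (min_le_right _ _) (le_max_of_le_right ?_)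
  nlinarith

/-- Second assertion of Proposition A.1: `(k,l,m) ↦ φ(k,l) + φ(l,m)` is uniformly
bounded away from zero on `ℝ³`. -/
theorem phase_sum_uniformly_bounded_away_from_zero (d : ℝ) (hd : 0 < d) :
    ∃ φ₀ : ℝ, 0 < φ₀ ∧ ∀ k l m : ℝ, φ₀ ≤ ‖phase d k l + phase d l m‖ := by
  have h2 : Real.sqrt 2 ^ 2 = 2 := Real.sq_sqrt (by norm_num)
  have hsn : 0 ≤ Real.sqrt 2 := Real.sqrt_nonneg 2
  have h1 : 1 < Real.sqrt 2 := by nlinarith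
  refine ⟨min (Real.sqrt 2 - 1) (6 * d), lt_min (by linarith) (by linarith), ?_⟩
  intro k l m
  set z := phase d k l + phase d l m with hz
  have him : z.im = jb k - jb (k - l) - jb (l - m) - jb m := by
    simp only [hz, phase, lamHat, Complex.add_im, Complex.neg_im, Complex.sub_im,
      Complex.mul_im, Complex.ofReal_re, Complex.ofReal_im, Complex.I_re, Complex.I_im]
    ring
  have hre : z.re = d * k ^ 2 - d * (k - l) ^ 2 - d * (l - m) ^ 2 - d * m ^ 2 := by
    simp only [hz, phase, lamHat, Complex.add_re, Complex.neg_re, Complex.sub_re,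
      Complex.mul_re, Complex.ofReal_re, Complex.ofReal_im, Complex.I_re, Complex.I_im]
    ring
  clear_value z
  have hk : k = (k - l) + (l - m) + m := by ring
  have key := phase_key d (k - l) (l - m) m hd
  rw [← hk] at key
  have hS : jb (k - l) + jb (l - m) + jb m - jb k ≤ ‖z‖ := by
    have e : jb (k - l) + jb (l - m) + jb m - jb k = -z.im := by rw [him]; ring
    have h := neg_abs_le z.im
    have := Complex.abs_im_le_norm z
    linarith
  have hR : 2 * d * ((k - l) * (l - m) + (k - l) * m + (l - m) * m) ≤ ‖z‖ := by
    have e : z.re = 2 * d * ((k - l) * (l - m) + (k - l) * m + (l - m) * m) := by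
      rw [hre]; ring
    have h := le_abs_self z.re
    have := Complex.abs_re_le_norm z
    linarith
  exact le_trans key (max_le hS hR)
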